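/- Reciprocally derived attributable fractions satisfy their own feasible mixing bounds: suppose η^{k,ℓ}_{a,b} ∈ ℝ satisfies max(0, z^{ℓ,·}_{b,a}/z^{k,·}_{a,b} − Σ_{t≠k} z^{t,·}_{a,b}/z^{k,·}_{a,b}) ≤ η^{k,ℓ}_{a,b} ≤ min(1, z^{ℓ,·}_{b,a}/z^{k,·}_{a,b}), and define η^{ℓ,k}_{b,a} := (z^{k,·}_{a,b}/z^{ℓ,·}_{b,a}) η^{k,ℓ}_{a,b}. If margins are related by z_{a,b} := Σ_t z^{t,·}_{a,b} = Σ_t z^{t,·}_{b,a} =: z_{b,a}, then η^{ℓ,k}_{b,a} satisfies max(0, z^{k,·}_{a,b}/z^{ℓ,·}_{b,a} − Σ_{t≠ℓ} z^{t,·}_{b,a}/z^{ℓ,·}_{b,a}) ≤ η^{ℓ,k}_{b,a} ≤ min(1, z^{k,·}_{a,b}/z^{ℓ,·}_{b,a}). -/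

import Mathlib

/-- Attributable fractions derived via reciprocity satisfy their own feasible
mixing bounds. Here `zab t` denotes the margin `z^{t,·}_{a,b}` and `zba t`
denotes `z^{t,·}_{b,a}`. -/
theorem reciprocal_attributable_fraction_bounds {X : Type*} [Fintype X] [DecidableEq X]
    (zab zba : X → ℝ)
    (hab : ∀ t, 0 < zab t) (hba : ∀ t, 0 < zba t)
    (htot : ∑ t, zab t = ∑ t, zba t)
    (k ℓ : X) (η : ℝ)
    (hlo : max 0 (zba ℓ / zab k - ∑ t ∈ Finset.univ.erase k, zab t / zab k) ≤ η)
    (hhi : η ≤ min 1 (zba ℓ / zab k)) :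
    max 0 (zab k / zba ℓ - ∑ t ∈ Finset.univ.erase ℓ, zba t / zba ℓ)
        ≤ (zab k / zba ℓ) * η
    ∧ (zab k / zba ℓ) * η ≤ min 1 (zab k / zba ℓ) := by
  have hA := hab k
  have hB := hba ℓ
  have hek : ∑ t ∈ Finset.univ.erase k, zab t / zab k
      = ((∑ t, zab t) - zab k) / zab k := by
    rw [← Finset.sum_div, Finset.sum_erase_eq_sub (Finset.mem_univ k)]
  have hel : ∑ t ∈ Finset.univ.erase ℓ, zba t / zba ℓ
      = ((∑ t, zba t) - zba ℓ) / zba ℓ := by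
    rw [← Finset.sum_div, Finset.sum_erase_eq_sub (Finset.mem_univ ℓ)]
  have hη0 : 0 ≤ η := le_trans (le_max_left _ _) hlo
  have hη1 : η ≤ 1 := hhi.trans (min_le_left _ _)
  have hηb : η ≤ zba ℓ / zab k := hhi.trans (min_le_right _ _)
  have hηb' : η * zab k ≤ zba ℓ := by
    have := (le_div_iff₀ hA).mp hηb
    linarith
  have hkey : zba ℓ / zab k - ((∑ t, zab t) - zab k) / zab k ≤ η := by
    rw [← hek]; exact le_trans (le_max_right _ _) hlo
  have hkey' : zba ℓ - ((∑ t, zab t) - zab k) ≤ η * zab k := by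
    rw [div_sub_div_same] at hkey
    have := (div_le_iff₀ hA).mp hkey
    linarith
  constructor
  · apply max_le
    · positivity
    · rw [hel, div_sub_div_same, div_mul_eq_mul_div, div_le_div_iff₀ hB hB]
      nlinarith
  · apply le_min
    · rw [div_mul_eq_mul_div, div_le_one hB]
      nlinarith
    · rw [div_mul_eq_mul_div, div_le_div_iff₀ hB hB]
      nlinarith [mul_nonneg (mul_nonneg hA.le hB.le) (sub_nonneg.mpr hη1)]
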